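/- Let n ≥ 1. A continuous function f : ℝ^n → ℝ^n is intra order-preserving if and only if there exists a continuous function w : ℝ^n → ℝ^n such that: (i) for every x ∈ ℝ^n, every permutation σ sorting x, and every i ∈ {1,…,n}, f(x)_{σ(i)} = Σ_{j=i}^{n} w_j(x); (ii) for every x ∈ ℝ^n and every i < n, w_i(x) = 0 if y_i = y_{i+1} and w_i(x) > 0 if y_i > y_{i+1}, where y is the sorted version of x (w_n(x) is unconstrained). -/

import Mathlib

/-- `f` is intra order-preserving: `x` and `f x` share the same ranking, i.e., all strict
inequalities (and hence all ties) among coordinates are preserved. -/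
def IntraOrderPreserving (n : ℕ) (f : (Fin n → ℝ) → (Fin n → ℝ)) : Prop :=
  ∀ (x : Fin n → ℝ) (i j : Fin n), x i > x j ↔ f x i > f x j

/-- `σ` is a permutation sorting `x` in nonincreasing order. -/
def SortsPerm (n : ℕ) (σ : Equiv.Perm (Fin n)) (x : Fin n → ℝ) : Prop :=
  Antitone (x ∘ σ)

/-- The sorted (nonincreasing) version of `x`. -/
noncomputable def sortedDesc (n : ℕ) (x : Fin n → ℝ) : Fin n → ℝ :=
  fun i => x (Tuple.sort (fun j => -x j) i)

private lemma sorts_sort {n : ℕ} (x : Fin n → ℝ) :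
    SortsPerm n (Tuple.sort fun j => -x j) x := by
  intro a b hab
  have h := Tuple.monotone_sort (fun j => -x j) hab
  simp only [Function.comp_apply, neg_le_neg_iff] at h
  simp only [Function.comp_apply]
  exact h

private lemma comp_eq_sorted {n : ℕ} (x : Fin n → ℝ) (σ : Equiv.Perm (Fin n))
    (h : SortsPerm n σ x) (i : Fin n) : x (σ i) = sortedDesc n x i := by
  have hm : Monotone ((fun j => -x j) ∘ σ) := by
    intro a b hab
    simp only [Function.comp_apply, neg_le_neg_iff]
    exact h hab
  have hc := Tuple.comp_sort_eq_comp_iff_monotone.2 hm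
  have h1 := congrFun hc i
  simp only [Function.comp_apply] at h1
  have h2 := neg_injective h1
  simpa [sortedDesc] using h2

private lemma antitone_sorted {n : ℕ} (x : Fin n → ℝ) : Antitone (sortedDesc n x) :=
  fun a b hab => sorts_sort x hab

private lemma consec_eq {n : ℕ} (y : Fin n → ℝ) :
    ∀ (d a b : ℕ) (hb : b < n), b = a + d →
      (∀ (k : ℕ), a ≤ k → k < b → ∀ (hk : k < n) (hk1 : k + 1 < n),
        y ⟨k, hk⟩ = y ⟨k + 1, hk1⟩) →
      ∀ (ha : a < n), y ⟨a, ha⟩ = y ⟨b, hb⟩ := by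
  intro d
  induction d with
  | zero =>
    intro a b hb hd _ ha
    subst hd
    rfl
  | succ d ih =>
    intro a b hb hd H ha
    have ha1 : a + 1 < n := by omega
    have step : y ⟨a, ha⟩ = y ⟨a + 1, ha1⟩ := H a le_rfl (by omega) ha ha1
    exact step.trans (ih (a + 1) b hb (by omega)
      (fun k h1 h2 hk hk1 => H k (by omega) h2 hk hk1) ha1)

theorem stmt_0 (n : ℕ) (hn : 1 ≤ n) (f : (Fin n → ℝ) → (Fin n → ℝ))
    (hf : Continuous f) :
    IntraOrderPreserving n f ↔
      ∃ w : (Fin n → ℝ) → (Fin n → ℝ), Continuous w ∧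
        (∀ (x : Fin n → ℝ) (σ : Equiv.Perm (Fin n)), SortsPerm n σ x →
          ∀ i : Fin n, f x (σ i) = ∑ j ∈ Finset.Ici i, w x j) ∧
        (∀ (x : Fin n → ℝ) (i : ℕ) (hi : i + 1 < n),
          (sortedDesc n x ⟨i, Nat.lt_of_succ_lt hi⟩ = sortedDesc n x ⟨i + 1, hi⟩ →
            w x ⟨i, Nat.lt_of_succ_lt hi⟩ = 0) ∧
          (sortedDesc n x ⟨i, Nat.lt_of_succ_lt hi⟩ > sortedDesc n x ⟨i + 1, hi⟩ →
            0 < w x ⟨i, Nat.lt_of_succ_lt hi⟩)) := by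
  constructor
  · -- forward direction
    intro hiop
    set g : (Fin n → ℝ) → Fin n → ℝ := fun x => sortedDesc n (f x) with hg
    have hfg : ∀ (x : Fin n → ℝ) (σ : Equiv.Perm (Fin n)), SortsPerm n σ x →
        ∀ i, f x (σ i) = g x i := by
      intro x σ hσ i
      have hA : SortsPerm n σ (f x) := by
        intro a b hab
        have hx : x (σ b) ≤ x (σ a) := hσ hab
        simp only [Function.comp_apply]
        by_contra hlt
        push_neg at hlt
        exact absurd ((hiop x (σ b) (σ a)).2 hlt) (not_lt.2 hx)
      exact comp_eq_sorted (f x) σ hA i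
    set W : (Fin n → ℝ) → Fin n → ℝ :=
      fun x i => if h : (i : ℕ) + 1 < n then g x i - g x ⟨(i : ℕ) + 1, h⟩ else g x i with hW
    have hWval : ∀ (z : Fin n → ℝ) (k : Fin n) (h : (k : ℕ) + 1 < n),
        W z k = g z k - g z ⟨(k : ℕ) + 1, h⟩ := by
      intro z k h
      simp only [hW]
      rw [dif_pos h]
    have hWlast : ∀ (z : Fin n → ℝ) (k : Fin n), ¬ ((k : ℕ) + 1 < n) → W z k = g z k := by
      intro z k h
      simp only [hW]
      rw [dif_neg h]
    refine ⟨W, ?_, ?_, ?_⟩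
    · -- continuity
      have hgc : ∀ k : Fin n, Continuous fun x => g x k := by
        intro k
        refine LocallyFinite.continuous
          (f := fun τ : Equiv.Perm (Fin n) => {x : Fin n → ℝ | SortsPerm n τ x})
          (locallyFinite_of_finite _) ?_ ?_ ?_
        · apply Set.eq_univ_of_forall
          intro x0
          exact Set.mem_iUnion.2 ⟨Tuple.sort fun j => -x0 j, sorts_sort x0⟩
        · intro τ
          show IsClosed {x : Fin n → ℝ | SortsPerm n τ x}
          have hset : {x : Fin n → ℝ | SortsPerm n τ x} =
              ⋂ (a : Fin n) (b : Fin n) (_ : a ≤ b), {x : Fin n → ℝ | x (τ b) ≤ x (τ a)} := by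
            ext x
            simp only [Set.mem_setOf_eq, Set.mem_iInter]
            exact ⟨fun h a b hab => h hab, fun h a b hab => h a b hab⟩
          rw [hset]
          exact isClosed_iInter fun a => isClosed_iInter fun b => isClosed_iInter fun _ =>
            isClosed_le (continuous_apply _) (continuous_apply _)
        · intro τ
          exact ContinuousOn.congr (((continuous_apply (τ k)).comp hf).continuousOn)
            (fun x hx => (hfg x τ hx k).symm)
      apply continuous_pi
      intro i
      by_cases h : (i : ℕ) + 1 < n
      · have : (fun x => W x i) = fun x => g x i - g x ⟨(i : ℕ) + 1, h⟩ := by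
          funext z; exact hWval z i h
        rw [this]
        exact (hgc i).sub (hgc ⟨(i : ℕ) + 1, h⟩)
      · have : (fun x => W x i) = fun x => g x i := by
          funext z; exact hWlast z i h
        rw [this]
        exact hgc i
    · -- sum property
      have htel : ∀ (z : Fin n → ℝ) (m : ℕ) (i : Fin n), (i : ℕ) + m + 1 = n →
          ∑ j ∈ Finset.Ici i, W z j = g z i := by
        intro z m
        induction m with
        | zero =>
          intro i hi
          have hs : Finset.Ici i = {i} := by
            ext k
            have hk := k.isLt
            simp only [Finset.mem_Ici, Finset.mem_singleton, Fin.le_def, Fin.ext_iff]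
            omega
          rw [hs, Finset.sum_singleton, hWlast z i (by omega)]
        | succ m ih =>
          intro i hi
          have h1 : (i : ℕ) + 1 < n := by omega
          have hins : Finset.Ici i = insert i (Finset.Ici (⟨(i : ℕ) + 1, h1⟩ : Fin n)) := by
            ext k
            simp only [Finset.mem_Ici, Finset.mem_insert, Fin.le_def, Fin.ext_iff]
            omega
          have hni : i ∉ Finset.Ici (⟨(i : ℕ) + 1, h1⟩ : Fin n) := by
            simp only [Finset.mem_Ici, Fin.le_def]
            omega
          rw [hins, Finset.sum_insert hni,
            ih ⟨(i : ℕ) + 1, h1⟩ (show (i : ℕ) + 1 + m + 1 = n by omega), hWval z i h1]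
          ring
      intro x σ hσ i
      rw [hfg x σ hσ i]
      exact (htel x (n - 1 - (i : ℕ)) i (by have := i.isLt; omega)).symm
    · -- sign property
      intro x i hi
      have hs0 : SortsPerm n (Tuple.sort fun j => -x j) x := sorts_sort x
      set σ₀ : Equiv.Perm (Fin n) := Tuple.sort fun j => -x j with hσ₀
      have hgv : ∀ k : Fin n, g x k = f x (σ₀ k) := fun k => (hfg x σ₀ hs0 k).symm
      constructor
      · intro he
        have he' : x (σ₀ ⟨i, Nat.lt_of_succ_lt hi⟩) = x (σ₀ ⟨i + 1, hi⟩) := he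
        have hfe : f x (σ₀ ⟨i, Nat.lt_of_succ_lt hi⟩) = f x (σ₀ ⟨i + 1, hi⟩) := by
          apply le_antisymm
          · by_contra hlt
            push_neg at hlt
            have h2 := (hiop x (σ₀ ⟨i, Nat.lt_of_succ_lt hi⟩) (σ₀ ⟨i + 1, hi⟩)).2 hlt
            rw [he'] at h2
            exact lt_irrefl _ h2
          · by_contra hlt
            push_neg at hlt
            have h2 := (hiop x (σ₀ ⟨i + 1, hi⟩) (σ₀ ⟨i, Nat.lt_of_succ_lt hi⟩)).2 hlt
            rw [he'] at h2
            exact lt_irrefl _ h2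
        rw [hWval x ⟨i, Nat.lt_of_succ_lt hi⟩ hi]
        have heq : g x ⟨i, Nat.lt_of_succ_lt hi⟩ =
            g x ⟨((⟨i, Nat.lt_of_succ_lt hi⟩ : Fin n) : ℕ) + 1, hi⟩ := by
          rw [hgv, hgv]
          exact hfe
        rw [heq, sub_self]
      · intro hgt
        have hg' : x (σ₀ ⟨i, Nat.lt_of_succ_lt hi⟩) > x (σ₀ ⟨i + 1, hi⟩) := hgt
        have hfgt := (hiop x (σ₀ ⟨i, Nat.lt_of_succ_lt hi⟩) (σ₀ ⟨i + 1, hi⟩)).1 hg'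
        rw [hWval x ⟨i, Nat.lt_of_succ_lt hi⟩ hi]
        have hlt : g x ⟨((⟨i, Nat.lt_of_succ_lt hi⟩ : Fin n) : ℕ) + 1, hi⟩ <
            g x ⟨i, Nat.lt_of_succ_lt hi⟩ := by
          rw [hgv, hgv]
          exact hfgt
        linarith
  · -- reverse direction
    rintro ⟨w, _hwc, hsum, hsign⟩ x i j
    have hs : SortsPerm n (Tuple.sort fun k => -x k) x := sorts_sort x
    set σ : Equiv.Perm (Fin n) := Tuple.sort fun k => -x k with hσ
    set y : Fin n → ℝ := sortedDesc n x with hy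
    have hyanti : Antitone y := antitone_sorted x
    have hfs : ∀ k, f x (σ k) = ∑ m ∈ Finset.Ici k, w x m := fun k => hsum x σ hs k
    have hconsec : ∀ (k : ℕ) (h2 : k + 1 < n),
        y ⟨k, Nat.lt_of_succ_lt h2⟩ = y ⟨k + 1, h2⟩ ∨
        y ⟨k + 1, h2⟩ < y ⟨k, Nat.lt_of_succ_lt h2⟩ := by
      intro k h2
      rcases eq_or_lt_of_le (hyanti (show (⟨k, Nat.lt_of_succ_lt h2⟩ : Fin n) ≤ ⟨k + 1, h2⟩ by
        simp [Fin.le_def])) with h | h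
      · exact Or.inl h.symm
      · exact Or.inr h
    have hnn : ∀ k : Fin n, (k : ℕ) + 1 < n → 0 ≤ w x k := by
      intro k hk
      rcases hconsec (k : ℕ) hk with h | h
      · exact le_of_eq ((hsign x (k : ℕ) hk).1 h).symm
      · exact le_of_lt ((hsign x (k : ℕ) hk).2 h)
    have hconst : ∀ a b : Fin n, a ≤ b → (∀ k : Fin n, a ≤ k → k < b → w x k = 0) →
        y a = y b := by
      intro a b hab hw
      have H : ∀ (k : ℕ), (a : ℕ) ≤ k → k < (b : ℕ) → ∀ (hk : k < n) (hk1 : k + 1 < n),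
          y ⟨k, hk⟩ = y ⟨k + 1, hk1⟩ := by
        intro k h1 h2 hk hk1
        rcases hconsec k hk1 with h | h
        · exact h
        · exfalso
          have h0 : w x ⟨k, Nat.lt_of_succ_lt hk1⟩ = 0 :=
            hw ⟨k, Nat.lt_of_succ_lt hk1⟩ (by rw [Fin.le_def]; exact h1)
              (by rw [Fin.lt_def]; exact h2)
          have hpos := (hsign x k hk1).2 h
          rw [h0] at hpos
          exact lt_irrefl 0 hpos
      have := consec_eq y ((b : ℕ) - (a : ℕ)) (a : ℕ) (b : ℕ) b.isLt
        (by have := Fin.le_def.1 hab; omega) H a.isLt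
      exact this
    have hB : ∀ a b : Fin n, a ≤ b → (y a > y b ↔ 0 < ∑ k ∈ Finset.Ico a b, w x k) := by
      intro a b hab
      constructor
      · intro hgt
        by_cases hex : ∃ k ∈ Finset.Ico a b, 0 < w x k
        · obtain ⟨k, hk, hkpos⟩ := hex
          refine Finset.sum_pos' ?_ ⟨k, hk, hkpos⟩
          intro t ht
          rw [Finset.mem_Ico] at ht
          exact hnn t (by have := b.isLt; have := Fin.lt_def.1 ht.2; omega)
        · exfalso
          push_neg at hex
          have hz : ∀ k : Fin n, a ≤ k → k < b → w x k = 0 := by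
            intro k h1 h2
            have hm : k ∈ Finset.Ico a b := Finset.mem_Ico.2 ⟨h1, h2⟩
            exact le_antisymm (hex k hm)
              (hnn k (by have := b.isLt; have := Fin.lt_def.1 h2; omega))
          exact absurd (hconst a b hab hz) (ne_of_gt hgt)
      · intro hpos
        by_contra hng
        have heq : y a = y b := le_antisymm (not_lt.1 hng) (hyanti hab)
        have hz : ∀ k ∈ Finset.Ico a b, w x k = 0 := by
          intro k hk
          rw [Finset.mem_Ico] at hk
          have hk1 : (k : ℕ) + 1 < n := by
            have := b.isLt; have := Fin.lt_def.1 hk.2; omega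
          have e1 : y ⟨(k : ℕ) + 1, hk1⟩ ≤ y ⟨(k : ℕ), Nat.lt_of_succ_lt hk1⟩ :=
            hyanti (by simp [Fin.le_def])
          have e2 : y ⟨(k : ℕ), Nat.lt_of_succ_lt hk1⟩ ≤ y a := hyanti hk.1
          have e3 : y b ≤ y ⟨(k : ℕ) + 1, hk1⟩ :=
            hyanti (by rw [Fin.le_def]; exact Fin.lt_def.1 hk.2)
          exact (hsign x (k : ℕ) hk1).1 (le_antisymm (by linarith) e1)
        rw [Finset.sum_eq_zero hz] at hpos
        exact lt_irrefl 0 hpos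
    have hIsplit : ∀ a b : Fin n, a ≤ b →
        ∑ k ∈ Finset.Ici a, w x k =
          (∑ k ∈ Finset.Ico a b, w x k) + ∑ k ∈ Finset.Ici b, w x k := by
      intro a b hab
      have hdisj : Disjoint (Finset.Ico a b) (Finset.Ici b) := by
        rw [Finset.disjoint_left]
        intro k hk hk'
        rw [Finset.mem_Ico] at hk
        rw [Finset.mem_Ici] at hk'
        exact absurd hk.2 (not_lt.2 hk')
      have hun : Finset.Ico a b ∪ Finset.Ici b = Finset.Ici a := by
        ext k
        simp only [Finset.mem_union, Finset.mem_Ico, Finset.mem_Ici]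
        constructor
        · rintro (⟨h1, _⟩ | h)
          · exact h1
          · exact hab.trans h
        · intro h
          rcases lt_or_ge k b with h2 | h2
          · exact Or.inl ⟨h, h2⟩
          · exact Or.inr h2
      rw [← hun, Finset.sum_union hdisj]
    have hxi : x i = y (σ.symm i) := by
      have := comp_eq_sorted x σ hs (σ.symm i)
      rw [Equiv.apply_symm_apply] at this
      exact this
    have hxj : x j = y (σ.symm j) := by
      have := comp_eq_sorted x σ hs (σ.symm j)
      rw [Equiv.apply_symm_apply] at this
      exact this
    have hfi : f x i = ∑ k ∈ Finset.Ici (σ.symm i), w x k := by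
      have := hfs (σ.symm i)
      rw [Equiv.apply_symm_apply] at this
      exact this
    have hfj : f x j = ∑ k ∈ Finset.Ici (σ.symm j), w x k := by
      have := hfs (σ.symm j)
      rw [Equiv.apply_symm_apply] at this
      exact this
    rw [hxi, hxj, hfi, hfj]
    rcases le_total (σ.symm i) (σ.symm j) with hab | hba
    · rw [hIsplit _ _ hab, hB _ _ hab]
      constructor
      · intro h; linarith
      · intro h; linarith
    · rw [hIsplit _ _ hba]
      have h1 : ¬ (y (σ.symm i) > y (σ.symm j)) := not_lt.2 (hyanti hba)
      have h2 : 0 ≤ ∑ k ∈ Finset.Ico (σ.symm j) (σ.symm i), w x k := by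
        refine Finset.sum_nonneg fun t ht => ?_
        rw [Finset.mem_Ico] at ht
        exact hnn t (by have := (σ.symm i).isLt; have := Fin.lt_def.1 ht.2; omega)
      constructor
      · intro h; exact absurd h h1
      · intro h; exfalso; linarith
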